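/- Let h_c, h_r be independent Gamma(m,m) random variables with m a positive integer, and let positive constants P_c, P_r, a₁, a₂, a₃, a₄, a₅, γ_SIC, γ_th be given. Then the joint probability P( P_c h_c/(P_r a₃ h_r + a₁ + a₂) > γ_SIC and P_r h_r/(a₄ + a₅) > γ_th ) equals Σ_{p=0}^{m−1} Σ_{r=0}^{p} C(p,r) · (a₁+a₂)^{p−r}(a₃P_r)^r/(Γ(m) m^r p!) · (m γ_SIC/P_c)^p · exp(−m γ_SIC(a₁+a₂)/P_c) · (γ_SIC a₃ P_r/P_c + 1)^{−(r+m)} · Γ(r+m, (γ_th m(a₄+a₅)/P_r)·(γ_SIC a₃ P_r/P_c + 1)). -/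

import Mathlib

open MeasureTheory ProbabilityTheory Set

/-- Nakagami-m power-gain density (Gamma with shape m, rate m), m a positive integer. -/
noncomputable def nakDensity (m : ℕ) (x : ℝ) : ℝ :=
  if 0 < x then (m : ℝ) ^ m / Real.Gamma m * x ^ (m - 1) * Real.exp (-(m * x)) else 0

section Aux
open Filter Real


lemma intOn_pow_exp (n : ℕ) {t : ℝ} (ht : 0 ≤ t) :
    IntegrableOn (fun u : ℝ => u ^ n * Real.exp (-u)) (Ioi t) := by
  have h := Real.GammaIntegral_convergent (s := (n : ℝ) + 1) (by positivity)
  have h0 : IntegrableOn (fun u : ℝ => u ^ n * Real.exp (-u)) (Ioi 0) := by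
    refine h.congr_fun (fun x hx => ?_) measurableSet_Ioi
    dsimp only
    rw [add_sub_cancel_right, Real.rpow_natCast]
    ring
  exact h0.mono_set (Ioi_subset_Ioi ht)

lemma integral_Ioi_pow_mul_exp_neg (n : ℕ) {t : ℝ} (ht : 0 ≤ t) :
    ∫ u in Ioi t, u ^ n * Real.exp (-u)
      = Real.exp (-t) * ∑ k ∈ Finset.range (n + 1),
          ((n.factorial : ℝ) / k.factorial) * t ^ k := by
  set c : ℕ → ℝ := fun k => (n.factorial : ℝ) / k.factorial with hc
  set S : ℝ → ℝ := fun x => ∑ k ∈ Finset.range (n + 1), c k * x ^ k with hS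
  have hderivS : ∀ x : ℝ, HasDerivAt S
      (∑ k ∈ Finset.range (n + 1), c k * (k * x ^ (k - 1))) x := by
    intro x
    exact HasDerivAt.fun_sum fun k _ => (hasDerivAt_pow k x).const_mul (c k)
  have hsum : ∀ x : ℝ, ∑ k ∈ Finset.range (n + 1), c k * (k * x ^ (k - 1))
      = ∑ k ∈ Finset.range n, c k * x ^ k := by
    intro x
    rw [Finset.sum_range_succ']
    simp only [Nat.cast_zero, zero_mul, mul_zero, add_zero]
    refine Finset.sum_congr rfl fun i _ => ?_
    have hfac : ((i + 1).factorial : ℝ) = (i + 1) * i.factorial := by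
      push_cast [Nat.factorial_succ]; ring
    have h1 : c (i + 1) * ((i : ℝ) + 1) = c i := by
      rw [hc]; simp only; rw [hfac]
      have h2 : (i.factorial : ℝ) ≠ 0 := Nat.cast_ne_zero.mpr i.factorial_ne_zero
      field_simp
    simp only [Nat.add_sub_cancel]
    push_cast
    calc c (i + 1) * (((i : ℝ) + 1) * x ^ i) = (c (i + 1) * ((i : ℝ) + 1)) * x ^ i := by ring
    _ = c i * x ^ i := by rw [h1]
  have hF : ∀ x : ℝ, HasDerivAt (fun x => -(Real.exp (-x) * S x))
      (x ^ n * Real.exp (-x)) x := by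
    intro x
    have he : HasDerivAt (fun x : ℝ => Real.exp (-x)) (Real.exp (-x) * (-1)) x :=
      (hasDerivAt_neg x).exp
    have := (he.mul (hderivS x)).neg
    refine this.congr_deriv ?_
    rw [hsum x]
    have hlast : S x = ∑ k ∈ Finset.range n, c k * x ^ k + c n * x ^ n :=
      Finset.sum_range_succ _ _
    have hcn : c n = 1 := by
      rw [hc]; simp only
      rw [div_self (Nat.cast_ne_zero.mpr n.factorial_ne_zero)]
    rw [hlast, hcn]
    ring
  have htend : Tendsto (fun x => -(Real.exp (-x) * S x)) atTop (nhds 0) := by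
    have h1 : ∀ x : ℝ, Real.exp (-x) * S x
        = ∑ k ∈ Finset.range (n + 1), c k * (x ^ k * Real.exp (-x)) := by
      intro x; rw [hS, Finset.mul_sum]; exact Finset.sum_congr rfl fun k _ => by ring
    have h2 : Tendsto (fun x => Real.exp (-x) * S x) atTop (nhds 0) := by
      simp only [h1]
      have := tendsto_finset_sum (Finset.range (n + 1))
        (fun k _ => (tendsto_pow_mul_exp_neg_atTop_nhds_zero k).const_mul (c k))
      simpa using this
    simpa using h2.neg
  have := integral_Ioi_of_hasDerivAt_of_tendsto' (f' := fun x => x ^ n * Real.exp (-x))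
      (fun x _ => hF x) (intOn_pow_exp n ht) htend
  rw [this]
  simp only [zero_sub, neg_neg]
  rfl

lemma intOn_pow_exp_mul (n : ℕ) {A T : ℝ} (hA : 0 < A) (hT : 0 ≤ T) :
    IntegrableOn (fun y : ℝ => y ^ n * Real.exp (-(A * y))) (Ioi T) := by
  have h := (integrableOn_Ioi_comp_mul_left_iff (fun u => u ^ n * Real.exp (-u)) T hA).mpr
    (intOn_pow_exp n (show (0:ℝ) ≤ A * T by positivity))
  have h2 := h.const_mul (A⁻¹ ^ n)
  refine h2.congr (ae_of_all _ fun y => ?_)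
  simp only
  rw [mul_pow]
  have : A⁻¹ ^ n * A ^ n = 1 := by
    rw [← mul_pow, inv_mul_cancel₀ hA.ne', one_pow]
  calc A⁻¹ ^ n * (A ^ n * y ^ n * Real.exp (-(A * y)))
      = (A⁻¹ ^ n * A ^ n) * (y ^ n * Real.exp (-(A * y))) := by ring
    _ = y ^ n * Real.exp (-(A * y)) := by rw [this, one_mul]

lemma integral_Ioi_pow_mul_exp_neg_mul (n : ℕ) {A T : ℝ} (hA : 0 < A) :
    ∫ y in Ioi T, y ^ n * Real.exp (-(A * y))
      = A⁻¹ ^ (n + 1) * ∫ u in Ioi (A * T), u ^ n * Real.exp (-u) := by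
  have h := integral_comp_mul_left_Ioi (fun u => u ^ n * Real.exp (-u)) T hA
  simp only [smul_eq_mul] at h
  have h2 : ∫ y in Ioi T, (A * y) ^ n * Real.exp (-(A * y))
      = A ^ n * ∫ y in Ioi T, y ^ n * Real.exp (-(A * y)) := by
    rw [← integral_const_mul]
    exact setIntegral_congr_fun measurableSet_Ioi fun y _ => by rw [mul_pow]; ring
  rw [h2] at h
  have hAn : (A : ℝ) ^ n ≠ 0 := pow_ne_zero _ hA.ne'
  field_simp [pow_succ] at h ⊢
  rw [← h, one_div, inv_pow, pow_succ]
  field_simp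

lemma nak_nonneg (m : ℕ) (x : ℝ) : 0 ≤ nakDensity m x := by
  unfold nakDensity
  split_ifs with h
  · rcases Nat.eq_zero_or_pos m with hm | hm
    · simp [hm]
    · have := Real.Gamma_pos_of_pos (show (0:ℝ) < m by exact_mod_cast hm)
      positivity
  · exact le_refl 0

lemma nak_eq_on_pos (m : ℕ) {x : ℝ} (hx : 0 < x) :
    nakDensity m x = (m : ℝ) ^ m / Real.Gamma m * (x ^ (m - 1) * Real.exp (-((m : ℝ) * x))) := by
  unfold nakDensity; rw [if_pos hx]; ring

lemma nak_integrableOn (m : ℕ) {s : ℝ} (hs : 0 ≤ s) :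
    IntegrableOn (nakDensity m) (Ioi s) := by
  rcases Nat.eq_zero_or_pos m with hm | hm
  · have h0 : ∀ x ∈ Ioi s, (0:ℝ) = nakDensity m x := by
      intro x _; unfold nakDensity; simp [hm, Real.Gamma_zero]
    exact (integrableOn_congr_fun h0 measurableSet_Ioi).mp
      (integrableOn_zero (μ := volume) (s := Ioi s))
  · have hm' : (0:ℝ) < m := by exact_mod_cast hm
    have h := (intOn_pow_exp_mul (m - 1) hm' hs).const_mul ((m : ℝ) ^ m / Real.Gamma m)
    exact (integrableOn_congr_fun
      (fun x hx => nak_eq_on_pos m (lt_of_le_of_lt hs hx)) measurableSet_Ioi).mpr h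

lemma nak_ccdf (m : ℕ) (hm : 0 < m) {s : ℝ} (hs : 0 ≤ s) :
    ∫ x in Ioi s, nakDensity m x
      = Real.exp (-((m : ℝ) * s)) * ∑ p ∈ Finset.range m,
          ((m : ℝ) * s) ^ p / p.factorial := by
  have hm' : (0:ℝ) < m := by exact_mod_cast hm
  have h1 : ∫ x in Ioi s, nakDensity m x
      = (m : ℝ) ^ m / Real.Gamma m * ∫ x in Ioi s, x ^ (m - 1) * Real.exp (-((m : ℝ) * x)) := by
    rw [← integral_const_mul]
    exact setIntegral_congr_fun measurableSet_Ioi fun x hx =>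
      nak_eq_on_pos m (lt_of_le_of_lt hs hx)
  rw [h1, integral_Ioi_pow_mul_exp_neg_mul (m - 1) hm',
    integral_Ioi_pow_mul_exp_neg (m - 1) (show (0:ℝ) ≤ (m:ℝ) * s by positivity)]
  obtain ⟨n, rfl⟩ : ∃ n, m = n + 1 := ⟨m - 1, (Nat.succ_pred_eq_of_pos hm).symm⟩
  simp only [Nat.add_sub_cancel]
  have hcast : ((n + 1 : ℕ) : ℝ) = (n : ℝ) + 1 := by push_cast; ring
  rw [show Real.Gamma ((n + 1 : ℕ) : ℝ) = (n.factorial : ℝ) by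
    rw [hcast]; exact_mod_cast Real.Gamma_nat_eq_factorial n]
  have hfac : ((n.factorial : ℝ)) ≠ 0 := Nat.cast_ne_zero.mpr n.factorial_ne_zero
  set X : ℝ := ((n + 1 : ℕ) : ℝ) * s with hX
  have hsum : ∑ k ∈ Finset.range (n + 1), ((n.factorial : ℝ) / k.factorial) * X ^ k
      = (n.factorial : ℝ) * ∑ k ∈ Finset.range (n + 1), X ^ k / k.factorial := by
    rw [Finset.mul_sum]; exact Finset.sum_congr rfl fun k _ => by ring
  rw [hsum]
  have hpow : (((n + 1 : ℕ) : ℝ)) ^ (n + 1) * ((((n + 1 : ℕ) : ℝ))⁻¹) ^ (n + 1) = 1 := by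
    rw [← mul_pow, mul_inv_cancel₀ hm'.ne', one_pow]
  set E := Real.exp (-X)
  set Sb := ∑ k ∈ Finset.range (n + 1), X ^ k / (k.factorial : ℝ)
  calc ((n + 1 : ℕ) : ℝ) ^ (n + 1) / (n.factorial : ℝ) *
        ((((n + 1 : ℕ) : ℝ))⁻¹ ^ (n + 1) * (E * ((n.factorial : ℝ) * Sb)))
      = ((((n + 1 : ℕ) : ℝ)) ^ (n + 1) * ((((n + 1 : ℕ) : ℝ))⁻¹) ^ (n + 1)) *
          (((n.factorial : ℝ)) / (n.factorial : ℝ)) * (E * Sb) := by ring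
    _ = E * Sb := by rw [hpow, div_self hfac]; ring

lemma nak_measurable (m : ℕ) : Measurable (nakDensity m) := by
  unfold nakDensity
  exact Measurable.ite (measurableSet_lt measurable_const measurable_id) (by fun_prop)
    measurable_const


end Aux

set_option maxHeartbeats 2000000 in
/-- Theorem 4 (success probability): joint probability of SIC success and far-user SINR success. -/
theorem stmt_16 {Ω : Type*} [MeasureSpace Ω] [IsProbabilityMeasure (ℙ : Measure Ω)]
    (m : ℕ) (hm : 0 < m) (hc hr : Ω → ℝ) (hcm : Measurable hc) (hrm : Measurable hr)
    (hclaw : Measure.map hc ℙ = volume.withDensity (fun x => ENNReal.ofReal (nakDensity m x)))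
    (hrlaw : Measure.map hr ℙ = volume.withDensity (fun x => ENNReal.ofReal (nakDensity m x)))
    (hindep : IndepFun hc hr ℙ)
    (Pc Pr a1 a2 a3 a4 a5 γSIC γth : ℝ)
    (hPc : 0 < Pc) (hPr : 0 < Pr) (ha1 : 0 < a1) (ha2 : 0 < a2) (ha3 : 0 < a3)
    (ha4 : 0 < a4) (ha5 : 0 < a5) (hγS : 0 < γSIC) (hγ : 0 < γth) :
    (ℙ {ω | γSIC < Pc * hc ω / (Pr * a3 * hr ω + a1 + a2) ∧
            γth < Pr * hr ω / (a4 + a5)}).toReal =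
      ∑ p ∈ Finset.range m, ∑ r ∈ Finset.range (p + 1),
        (Nat.choose p r : ℝ) * (a1 + a2) ^ (p - r) * (a3 * Pr) ^ r /
            (Real.Gamma m * (m : ℝ) ^ r * Nat.factorial p) *
          (m * γSIC / Pc) ^ p * Real.exp (-(m * γSIC * (a1 + a2) / Pc)) *
          (γSIC * a3 * Pr / Pc + 1) ^ (-((r : ℝ) + (m : ℝ))) *
          ∫ u in Ioi ((γth * m * (a4 + a5) / Pr) * (γSIC * a3 * Pr / Pc + 1)),
            u ^ (r + m - 1) * Real.exp (-u) := by
  obtain ⟨n, rfl⟩ : ∃ n, m = n + 1 := ⟨m - 1, (Nat.succ_pred_eq_of_pos hm).symm⟩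
  set m : ℕ := n + 1 with hmdef
  have hm' : (0:ℝ) < m := by positivity
  have hΓ : 0 < Real.Gamma m := Real.Gamma_pos_of_pos hm'
  set ν := volume.withDensity (fun x => ENNReal.ofReal (nakDensity m x)) with hν
  set T : ℝ := γth * (a4 + a5) / Pr with hTdef
  have hT : 0 < T := by positivity
  set g : ℝ → ℝ := fun y => γSIC * (Pr * a3 * y + a1 + a2) / Pc with hg
  have hgm : Measurable g := by fun_prop
  set B : ℝ := (m:ℝ) * γSIC * a3 * Pr / Pc with hB
  set K : ℝ := γSIC * a3 * Pr / Pc + 1 with hK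
  have hKpos : 0 < K := by positivity
  set A : ℝ := (m:ℝ) * K with hA
  have hApos : 0 < A := by positivity
  have hAmB : A = (m:ℝ) + B := by rw [hA, hK, hB]; ring
  set S : Set (ℝ × ℝ) := {p | T < p.2} ∩ {p | g p.2 < p.1} with hSdef
  have hS : MeasurableSet S :=
    (measurableSet_lt measurable_const measurable_snd).inter
      (measurableSet_lt (hgm.comp measurable_snd) measurable_fst)
  -- event rewriting
  have hev : {ω | γSIC < Pc * hc ω / (Pr * a3 * hr ω + a1 + a2) ∧
      γth < Pr * hr ω / (a4 + a5)} = (fun ω => (hc ω, hr ω)) ⁻¹' S := by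
    ext ω
    simp only [hSdef, mem_setOf_eq, mem_preimage, mem_inter_iff]
    constructor
    · rintro ⟨h1, h2⟩
      rw [lt_div_iff₀ (by positivity : (0:ℝ) < a4 + a5)] at h2
      have hy : T < hr ω := by rw [hTdef, div_lt_iff₀ hPr]; nlinarith
      have hy0 : 0 < hr ω := hT.trans hy
      have hD : 0 < Pr * a3 * hr ω + a1 + a2 := by positivity
      rw [lt_div_iff₀ hD] at h1
      refine ⟨hy, ?_⟩
      show γSIC * (Pr * a3 * hr ω + a1 + a2) / Pc < hc ω
      rw [div_lt_iff₀ hPc]; nlinarith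
    · rintro ⟨hy, h1⟩
      have hy0 : 0 < hr ω := hT.trans hy
      have hD : 0 < Pr * a3 * hr ω + a1 + a2 := by positivity
      have h1' : γSIC * (Pr * a3 * hr ω + a1 + a2) / Pc < hc ω := h1
      rw [div_lt_iff₀ hPc] at h1'
      rw [hTdef, div_lt_iff₀ hPr] at hy
      constructor
      · rw [lt_div_iff₀ hD]; nlinarith
      · rw [lt_div_iff₀ (by positivity : (0:ℝ) < a4 + a5)]; nlinarith
  haveI hprob : IsProbabilityMeasure ν := hclaw ▸ Measure.isProbabilityMeasure_map hcm.aemeasurable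
  have hmain : ℙ ((fun ω => (hc ω, hr ω)) ⁻¹' S) = (ν.prod ν) S := by
    rw [← Measure.map_apply (hcm.prodMk hrm) hS,
      (indepFun_iff_map_prod_eq_prod_map_map hcm.aemeasurable hrm.aemeasurable).mp hindep,
      hclaw, hrlaw]
  rw [hev, hmain, Measure.prod_apply_symm hS]
  -- slice
  have hslice : ∫⁻ y, ν ((fun x => (x, y)) ⁻¹' S) ∂ν = ∫⁻ y in Ioi T, ν (Ioi (g y)) ∂ν := by
    rw [← lintegral_indicator measurableSet_Ioi]
    refine lintegral_congr fun y => ?_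
    by_cases hy : T < y
    · rw [indicator_of_mem (mem_Ioi.mpr hy)]
      congr 1
      ext x
      simp [hSdef, hy, mem_Ioi]
    · rw [indicator_of_notMem (by simpa using hy)]
      have : ((fun x => (x, y)) ⁻¹' S) = ∅ := by
        ext x; simp [hSdef, hy]
      rw [this, measure_empty]
  rw [hslice]
  -- ccdf
  have hgpos : ∀ y : ℝ, T < y → 0 ≤ g y := by
    intro y hy
    have hy0 : 0 < y := hT.trans hy
    have : (0:ℝ) < γSIC * (Pr * a3 * y + a1 + a2) / Pc := by positivity
    exact this.le
  have hccdf : ∀ y ∈ Ioi T, ν (Ioi (g y)) = ENNReal.ofReal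
      (Real.exp (-((m:ℝ) * g y)) * ∑ p ∈ Finset.range m, ((m:ℝ) * g y) ^ p / p.factorial) := by
    intro y hy
    have hgy : 0 ≤ g y := hgpos y hy
    rw [hν, withDensity_apply _ measurableSet_Ioi,
      ← ofReal_integral_eq_lintegral_ofReal (nak_integrableOn m hgy)
        (ae_of_all _ fun x => nak_nonneg m x),
      nak_ccdf m hm hgy]
  rw [setLIntegral_congr_fun_ae measurableSet_Ioi (ae_of_all _ hccdf)]
  -- withDensity
  have hFm : Measurable (fun y : ℝ => ENNReal.ofReal
      (Real.exp (-((m:ℝ) * g y)) * ∑ p ∈ Finset.range m, ((m:ℝ) * g y) ^ p / p.factorial)) := by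
    fun_prop
  have hnakm : Measurable (fun x : ℝ => ENNReal.ofReal (nakDensity m x)) :=
    ENNReal.measurable_ofReal.comp (nak_measurable m)
  rw [hν, setLIntegral_withDensity_eq_setLIntegral_mul volume hnakm hFm measurableSet_Ioi]
  -- expansion
  set Cpr : ℕ → ℕ → ℝ := fun p r => (p.choose r : ℝ) * (a1 + a2) ^ (p - r) * (a3 * Pr) ^ r *
    ((m:ℝ) * γSIC / Pc) ^ p * Real.exp (-((m:ℝ) * γSIC * (a1 + a2) / Pc)) *
    ((m:ℝ) ^ m / Real.Gamma m) / p.factorial with hCpr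
  have hCpos : ∀ p r : ℕ, 0 ≤ Cpr p r := by
    intro p r; rw [hCpr]; positivity
  have hexpand : ∀ y ∈ Ioi T, nakDensity m y *
      (Real.exp (-((m:ℝ) * g y)) * ∑ p ∈ Finset.range m, ((m:ℝ) * g y) ^ p / p.factorial)
      = ∑ p ∈ Finset.range m, ∑ r ∈ Finset.range (p + 1),
          Cpr p r * (y ^ (r + n) * Real.exp (-(A * y))) := by
    intro y hy
    have hy0 : 0 < y := hT.trans hy
    rw [nak_eq_on_pos m hy0]
    have hexp1 : Real.exp (-((m:ℝ) * g y))
        = Real.exp (-(B * y)) * Real.exp (-((m:ℝ) * γSIC * (a1 + a2) / Pc)) := by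
      rw [← Real.exp_add]; congr 1; rw [hg, hB]; simp only; ring
    have hexp2 : Real.exp (-((m:ℝ) * y)) * Real.exp (-(B * y)) = Real.exp (-(A * y)) := by
      rw [← Real.exp_add]; congr 1; rw [hAmB]; ring
    have hpow : ∀ p : ℕ, ((m:ℝ) * g y) ^ p
        = ((m:ℝ) * γSIC / Pc) ^ p *
            ∑ r ∈ Finset.range (p + 1),
              (a3 * Pr * y) ^ r * (a1 + a2) ^ (p - r) * (p.choose r : ℝ) := by
      intro p
      rw [← add_pow, ← mul_pow]
      congr 1
      rw [hg]; simp only; ring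
    rw [hexp1, Finset.mul_sum, Finset.mul_sum]
    refine Finset.sum_congr rfl fun p _ => ?_
    rw [hpow p, Finset.mul_sum, Finset.sum_div, Finset.mul_sum, Finset.mul_sum]
    refine Finset.sum_congr rfl fun r _ => ?_
    rw [← hexp2, hCpr]
    simp only [hmdef, Nat.add_sub_cancel]
    ring
  -- pointwise to ofReal sums
  have h8 : ∀ y ∈ Ioi T,
      ((fun x => ENNReal.ofReal (nakDensity m x)) * fun y => ENNReal.ofReal
        (Real.exp (-((m:ℝ) * g y)) * ∑ p ∈ Finset.range m, ((m:ℝ) * g y) ^ p / p.factorial)) y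
      = ∑ p ∈ Finset.range m, ∑ r ∈ Finset.range (p + 1),
          ENNReal.ofReal (Cpr p r * (y ^ (r + n) * Real.exp (-(A * y)))) := by
    intro y hy
    have hy0 : 0 < y := hT.trans hy
    simp only [Pi.mul_apply]
    rw [← ENNReal.ofReal_mul (nak_nonneg m y), hexpand y hy,
      ENNReal.ofReal_sum_of_nonneg (fun p _ => Finset.sum_nonneg fun r _ =>
        mul_nonneg (hCpos p r) (by positivity))]
    exact Finset.sum_congr rfl fun p _ =>
      ENNReal.ofReal_sum_of_nonneg fun r _ => mul_nonneg (hCpos p r) (by positivity)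
  rw [setLIntegral_congr_fun_ae measurableSet_Ioi (ae_of_all _ h8)]
  have hmeas2 : ∀ (p r : ℕ), Measurable (fun y : ℝ =>
      ENNReal.ofReal (Cpr p r * (y ^ (r + n) * Real.exp (-(A * y))))) := by
    intro p r; fun_prop
  have hmeas1 : ∀ p ∈ Finset.range m, Measurable (fun y : ℝ =>
      ∑ r ∈ Finset.range (p + 1),
        ENNReal.ofReal (Cpr p r * (y ^ (r + n) * Real.exp (-(A * y))))) := by
    intro p _
    exact Finset.measurable_sum _ fun r _ => hmeas2 p r
  rw [lintegral_finset_sum _ hmeas1]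
  -- per-term evaluation
  have hterm : ∀ p ∈ Finset.range m, ∀ r ∈ Finset.range (p + 1),
      ∫⁻ y in Ioi T, ENNReal.ofReal (Cpr p r * (y ^ (r + n) * Real.exp (-(A * y))))
        = ENNReal.ofReal (Cpr p r * (A⁻¹ ^ (r + n + 1) *
            ∫ u in Ioi (A * T), u ^ (r + n) * Real.exp (-u))) := by
    intro p _ r _
    have hint : IntegrableOn (fun y : ℝ => Cpr p r * (y ^ (r + n) * Real.exp (-(A * y))))
        (Ioi T) := (intOn_pow_exp_mul (r + n) hApos hT.le).const_mul _
    have hnn : (0 : ℝ → ℝ) ≤ᵐ[volume.restrict (Ioi T)]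
        fun y => Cpr p r * (y ^ (r + n) * Real.exp (-(A * y))) := by
      refine (ae_restrict_iff' measurableSet_Ioi).mpr (ae_of_all _ fun y hy => ?_)
      have hy0 : 0 < y := hT.trans hy
      exact mul_nonneg (hCpos p r) (by positivity)
    rw [← ofReal_integral_eq_lintegral_ofReal hint hnn, integral_const_mul,
      integral_Ioi_pow_mul_exp_neg_mul (r + n) hApos]
  have hinner : ∀ p ∈ Finset.range m,
      ∫⁻ y in Ioi T, ∑ r ∈ Finset.range (p + 1),
          ENNReal.ofReal (Cpr p r * (y ^ (r + n) * Real.exp (-(A * y))))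
        = ∑ r ∈ Finset.range (p + 1), ENNReal.ofReal (Cpr p r * (A⁻¹ ^ (r + n + 1) *
            ∫ u in Ioi (A * T), u ^ (r + n) * Real.exp (-u))) := by
    intro p hp
    rw [lintegral_finset_sum _ fun r _ => hmeas2 p r]
    exact Finset.sum_congr rfl fun r hr => hterm p hp r hr
  rw [Finset.sum_congr rfl hinner]
  -- toReal
  rw [ENNReal.toReal_sum (fun p _ => ENNReal.sum_ne_top.mpr fun r _ => ENNReal.ofReal_ne_top)]
  refine Finset.sum_congr rfl fun p hp => ?_
  rw [ENNReal.toReal_sum (fun r _ => ENNReal.ofReal_ne_top)]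
  refine Finset.sum_congr rfl fun r hr => ?_
  have hI : 0 ≤ ∫ u in Ioi (A * T), u ^ (r + n) * Real.exp (-u) := by
    refine setIntegral_nonneg measurableSet_Ioi fun u hu => ?_
    have hu0 : 0 < u := lt_trans (by positivity) hu
    positivity
  rw [ENNReal.toReal_ofReal (mul_nonneg (hCpos p r) (mul_nonneg (by positivity) hI))]
  -- final matching
  have hlb : γth * (m:ℝ) * (a4 + a5) / Pr * K = A * T := by
    rw [hA, hTdef]; ring
  have hexp' : r + m - 1 = r + n := by omega
  have hrpow : K ^ (-((r:ℝ) + (m:ℝ))) = (K ^ (r + n + 1 : ℕ))⁻¹ := by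
    rw [← Real.rpow_natCast K (r + n + 1), ← Real.rpow_neg hKpos.le]
    congr 1
    have : ((r + n + 1 : ℕ) : ℝ) = (r : ℝ) + (m : ℝ) := by
      rw [hmdef]; push_cast; ring
    rw [this]
  rw [hexp', hlb, hrpow, hCpr, hA]
  simp only [hmdef]
  have h2 : ((((n+1:ℕ):ℝ)) * K)⁻¹ ^ (r+n+1)
      = ((((n+1:ℕ):ℝ)) ^ (r+n+1))⁻¹ * (K ^ (r+n+1))⁻¹ := by
    rw [mul_inv, mul_pow, inv_pow, inv_pow]
  rw [h2]
  field_simp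
  ring
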